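/- Let B be a real m×p matrix and c ∈ ℝᵖ. Suppose that for every real k > 0 there is a vector x(k) ∈ ℝᵐ satisfying x(k)ᵀBBᵀx(k) + k⁻¹‖x(k)‖² + x(k)ᵀBc ≤ 0. Then k⁻¹x(k) → 0 as k → ∞ (indeed ‖k⁻¹x(k)‖ ≤ ‖c‖/(2√k) for all k > 0). -/

import Mathlib

open Matrix

/-- **Analytic core of Proposition 2.** If for every `k > 0` the vector `x k` satisfies the
dissipativity inequality `xᵀBBᵀx + k⁻¹‖x‖² + xᵀBc ≤ 0`, then `‖k⁻¹ • x k‖ ≤ ‖c‖/(2√k)`,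
and hence `k⁻¹ • x k → 0` as `k → ∞`. -/
theorem perturbation_vanishes {m p : ℕ}
    (B : Matrix (Fin m) (Fin p) ℝ) (c : EuclideanSpace ℝ (Fin p))
    (x : ℝ → EuclideanSpace ℝ (Fin m))
    (hx : ∀ k : ℝ, 0 < k →
      (x k) ⬝ᵥ ((B * Bᵀ) *ᵥ (x k)) + k⁻¹ * ‖x k‖ ^ 2 + (x k) ⬝ᵥ (B *ᵥ c) ≤ 0) :
    (∀ k : ℝ, 0 < k → ‖k⁻¹ • x k‖ ≤ ‖c‖ / (2 * Real.sqrt k)) ∧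
      Filter.Tendsto (fun k : ℝ => k⁻¹ • x k) Filter.atTop (nhds 0) := by
  have key : ∀ k : ℝ, 0 < k → ‖k⁻¹ • x k‖ ≤ ‖c‖ / (2 * Real.sqrt k) := by
    intro k hk
    have h := hx k hk
    set Y : EuclideanSpace ℝ (Fin p) := WithLp.toLp 2 (Bᵀ *ᵥ (x k)) with hY
    have h1 : (x k) ⬝ᵥ ((B * Bᵀ) *ᵥ (x k)) = Y ⬝ᵥ Y := by
      rw [← Matrix.mulVec_mulVec, Matrix.dotProduct_mulVec, ← Matrix.mulVec_transpose]
    have h2 : (x k) ⬝ᵥ (B *ᵥ c) = Y ⬝ᵥ c := by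
      rw [Matrix.dotProduct_mulVec, ← Matrix.mulVec_transpose]
    have hYY : Y ⬝ᵥ Y = ‖Y‖ ^ 2 := by
      have := real_inner_self_eq_norm_sq Y
      rw [← this, EuclideanSpace.inner_eq_star_dotProduct]; simp [dotProduct]
    have hYc : Y ⬝ᵥ c = (inner ℝ Y c : ℝ) := by
      simp [EuclideanSpace.inner_eq_star_dotProduct, dotProduct, mul_comm]
    have hineq : ‖Y‖ ^ 2 + k⁻¹ * ‖x k‖ ^ 2 + (inner ℝ Y c : ℝ) ≤ 0 := by
      rw [← hYY, ← hYc, ← h1, ← h2]; exact h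
    have hcs : -(inner ℝ Y c : ℝ) ≤ ‖Y‖ * ‖c‖ := by
      have := abs_real_inner_le_norm Y c
      linarith [neg_abs_le (inner ℝ Y c : ℝ), this]
    have hstep : k⁻¹ * ‖x k‖ ^ 2 ≤ ‖Y‖ * ‖c‖ - ‖Y‖ ^ 2 := by linarith
    have hquad : ‖Y‖ * ‖c‖ - ‖Y‖ ^ 2 ≤ ‖c‖ ^ 2 / 4 := by nlinarith [sq_nonneg (‖Y‖ - ‖c‖ / 2)]
    have hxb : ‖x k‖ ^ 2 ≤ k * (‖c‖ ^ 2 / 4) := by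
      have := hstep.trans hquad
      calc ‖x k‖ ^ 2 = k * (k⁻¹ * ‖x k‖ ^ 2) := by field_simp
        _ ≤ k * (‖c‖ ^ 2 / 4) := by exact mul_le_mul_of_nonneg_left this hk.le
    have hsk : 0 < Real.sqrt k := Real.sqrt_pos.mpr hk
    have hxn : ‖x k‖ ≤ Real.sqrt k * (‖c‖ / 2) := by
      have hr : Real.sqrt (k * (‖c‖ ^ 2 / 4)) = Real.sqrt k * (‖c‖ / 2) := by
        rw [Real.sqrt_mul hk.le, show ‖c‖ ^ 2 / 4 = (‖c‖ / 2) ^ 2 by ring,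
          Real.sqrt_sq (by positivity)]
      calc ‖x k‖ = Real.sqrt (‖x k‖ ^ 2) := (Real.sqrt_sq (norm_nonneg _)).symm
        _ ≤ Real.sqrt (k * (‖c‖ ^ 2 / 4)) := Real.sqrt_le_sqrt hxb
        _ = Real.sqrt k * (‖c‖ / 2) := hr
    rw [norm_smul, Real.norm_eq_abs, abs_of_pos (inv_pos.mpr hk)]
    have hk2 : k⁻¹ * (Real.sqrt k * (‖c‖ / 2)) = ‖c‖ / (2 * Real.sqrt k) := by
      have hss := Real.mul_self_sqrt hk.le
      field_simp
      linear_combination ‖c‖ * hss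
    calc k⁻¹ * ‖x k‖ ≤ k⁻¹ * (Real.sqrt k * (‖c‖ / 2)) :=
          mul_le_mul_of_nonneg_left hxn (inv_nonneg.mpr hk.le)
      _ = ‖c‖ / (2 * Real.sqrt k) := hk2
  refine ⟨key, ?_⟩
  have hb : Filter.Tendsto (fun k : ℝ => ‖c‖ / (2 * Real.sqrt k)) Filter.atTop (nhds 0) := by
    apply Filter.Tendsto.div_atTop tendsto_const_nhds
    have hs : Filter.Tendsto Real.sqrt Filter.atTop Filter.atTop := by
      apply Filter.tendsto_atTop_atTop.mpr
      intro b
      refine ⟨max 0 (b ^ 2), fun a ha => ?_⟩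
      calc b ≤ |b| := le_abs_self b
        _ = Real.sqrt (b ^ 2) := (Real.sqrt_sq_eq_abs b).symm
        _ ≤ Real.sqrt a := Real.sqrt_le_sqrt ((le_max_right _ _).trans ha)
    exact Filter.Tendsto.const_mul_atTop (by norm_num : (0:ℝ) < 2) hs
  exact squeeze_zero_norm' (Filter.eventually_atTop.mpr ⟨1, fun k hk => key k (by linarith)⟩) hb
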